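/- Let T_{n-1} be the (n−1)×(n−1) tridiagonal matrix with all diagonal, superdiagonal, and subdiagonal entries equal to −2, and let B_n be the n×n matrix in block form [[0, e'],[e, T_{n-1}]], where e is the all-ones column vector. Then det(B_n) = 0 if n ≡ 0 (mod 3), det(B_n) = 2^{n-2}·(n−1)/3 if n ≡ 1 (mod 3), and det(B_n) = −2^{n-2}·(n+1)/3 if n ≡ 2 (mod 3). -/

import Mathlib

open Matrix

noncomputable section

/-- Tridiagonal matrix of order `m` with `a` on the diagonal, `b` on the superdiagonal
and `c` on the subdiagonal. -/
def tridiag {R : Type*} [Zero R] (m : ℕ) (a b c : R) : Matrix (Fin m) (Fin m) R :=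
  Matrix.of fun i j =>
    if (i : ℕ) = (j : ℕ) then a
    else if (j : ℕ) = (i : ℕ) + 1 then b
    else if (i : ℕ) = (j : ℕ) + 1 then c
    else 0

/-- The bordered matrix `[[0, e'],[e, A]]` where `e` is the all-ones vector. -/
def border {R : Type*} [Zero R] [One R] {m : ℕ} (A : Matrix (Fin m) (Fin m) R) :
    Matrix (Fin (m + 1)) (Fin (m + 1)) R :=
  Matrix.of fun i j =>
    if hi : i = 0 then (if j = 0 then 0 else 1)
    else if hj : j = 0 then 1
    else A (i.pred hi) (j.pred hj)

/-- The circulant matrix whose first row is `c`, each subsequent row the cyclic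
right shift of the previous one. -/
def circ {R : Type*} {m : ℕ} (c : Fin m → R) : Matrix (Fin m) (Fin m) R :=
  Matrix.of fun i j => c (j - i)

/-- The eccentricity matrix of the wheel graph `W_n` (hub is vertex `0`, cycle vertices
`1, …, n-1`): `E(W_n) = [[0, e'],[e, circ(0,0,2,…,2,0)]]`. -/
def EW (n : ℕ) : Matrix (Fin n) (Fin n) ℝ :=
  Matrix.of fun i j =>
    if i = j then 0
    else if (i : ℕ) = 0 ∨ (j : ℕ) = 0 then 1
    else if ((j : ℕ) : ZMod (n - 1)) - ((i : ℕ) : ZMod (n - 1)) = 1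
            ∨ ((i : ℕ) : ZMod (n - 1)) - ((j : ℕ) : ZMod (n - 1)) = 1 then 0
    else 2

lemma tri_apply (m : ℕ) (i j : Fin m) :
    tridiag m (-2 : ℝ) (-2) (-2) i j =
      if (i : ℕ) = (j : ℕ) ∨ (j : ℕ) = (i : ℕ) + 1 ∨ (i : ℕ) = (j : ℕ) + 1 then -2 else 0 := by
  simp only [tridiag, of_apply]
  split_ifs <;> tauto

lemma tridiag_submatrix_succ (m : ℕ) (a b c : ℝ) :
    (tridiag (m + 1) a b c).submatrix Fin.succ Fin.succ = tridiag m a b c := by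
  ext i j
  simp only [tridiag, submatrix_apply, of_apply, Fin.val_succ]
  split_ifs <;> first | rfl | omega

lemma detT_rec (m : ℕ) :
    (tridiag (m + 2) (-2 : ℝ) (-2) (-2)).det
      = -2 * (tridiag (m + 1) (-2 : ℝ) (-2) (-2)).det
        - 4 * (tridiag m (-2 : ℝ) (-2) (-2)).det := by
  set A := tridiag (m + 2) (-2 : ℝ) (-2) (-2) with hA
  have h1 : A.det = ∑ j : Fin (m + 2), (-1) ^ (j : ℕ) * A 0 j *
      (A.submatrix Fin.succ j.succAbove).det := det_succ_row_zero A
  rw [Fin.sum_univ_succ, Fin.sum_univ_succ] at h1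
  have hz : ∀ j : Fin m, (-1 : ℝ) ^ ((j.succ.succ : Fin (m+2)) : ℕ) * A 0 j.succ.succ *
      (A.submatrix Fin.succ (j.succ.succ).succAbove).det = 0 := by
    intro j
    have : A 0 j.succ.succ = 0 := by
      simp [hA, tridiag, Fin.val_succ]
    rw [this]; ring
  rw [Finset.sum_eq_zero (fun j _ => hz j), add_zero] at h1
  have e00 : A 0 0 = -2 := by simp [hA, tridiag]
  have e01 : A 0 (Fin.succ 0) = -2 := by simp [hA, tridiag]
  -- first minor
  have m0 : A.submatrix Fin.succ (Fin.succAbove 0) = tridiag (m + 1) (-2 : ℝ) (-2) (-2) := by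
    rw [Fin.succAbove_zero]
    exact tridiag_submatrix_succ (m + 1) _ _ _
  -- second minor
  set N := A.submatrix Fin.succ (Fin.succAbove (Fin.succ 0)) with hN
  have hNdet : N.det = -2 * (tridiag m (-2 : ℝ) (-2) (-2)).det := by
    have h2 : N.det = ∑ i : Fin (m + 1), (-1) ^ (i : ℕ) * N i 0 *
        (N.submatrix i.succAbove Fin.succ).det := det_succ_column_zero N
    rw [Fin.sum_univ_succ] at h2
    have hz2 : ∀ i : Fin m, (-1 : ℝ) ^ ((i.succ : Fin (m+1)) : ℕ) * N i.succ 0 *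
        (N.submatrix (i.succ).succAbove Fin.succ).det = 0 := by
      intro i
      have hc : (Fin.succAbove (Fin.succ 0) (0 : Fin (m+1))) = 0 := by
        apply Fin.succAbove_of_castSucc_lt
        simp [Fin.lt_def]
      have : N i.succ 0 = 0 := by
        simp [hN, submatrix_apply, hc, hA, tridiag, Fin.val_succ]
      rw [this]; ring
    rw [Finset.sum_eq_zero (fun i _ => hz2 i), add_zero] at h2
    have hc : (Fin.succAbove (Fin.succ 0) (0 : Fin (m+1))) = 0 := by
      apply Fin.succAbove_of_castSucc_lt
      simp [Fin.lt_def]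
    have eN0 : N 0 0 = -2 := by
      simp [hN, submatrix_apply, hc, hA, tridiag]
    have mN : N.submatrix (Fin.succAbove 0) Fin.succ = tridiag m (-2 : ℝ) (-2) (-2) := by
      rw [Fin.succAbove_zero]
      ext i j
      have hsa : (Fin.succ 0 : Fin (m+2)).succAbove (Fin.succ j) = (Fin.succ j).succ := by
        apply Fin.succAbove_of_le_castSucc
        simp [Fin.le_def, Fin.val_succ]
      simp only [hN, submatrix_apply, hsa, hA, tridiag, of_apply, Fin.val_succ]
      split_ifs <;> first | rfl | omega
    rw [eN0, mN] at h2
    rw [h2]; simp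
  rw [e00, e01, m0, hNdet] at h1
  rw [h1]; simp; ring

lemma detT_mod (k : ℕ) :
    (tridiag (3*k) (-2 : ℝ) (-2) (-2)).det = 8 ^ k ∧
    (tridiag (3*k+1) (-2 : ℝ) (-2) (-2)).det = -2 * 8 ^ k ∧
    (tridiag (3*k+2) (-2 : ℝ) (-2) (-2)).det = 0 := by
  induction k with
  | zero =>
    refine ⟨Matrix.det_fin_zero, ?_, ?_⟩
    · rw [show (3*0+1 : ℕ) = 1 from rfl, Matrix.det_fin_one]
      norm_num [tridiag]
    · rw [show (3*0+2 : ℕ) = 0+2 from rfl, detT_rec]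
      rw [show (0+1 : ℕ) = 3*0+1 from rfl, show (3*0 : ℕ) = 0 from rfl] at *
      have h1 : (tridiag (3*0+1) (-2 : ℝ) (-2) (-2)).det = -2 := by
        rw [show (3*0+1 : ℕ) = 1 from rfl, Matrix.det_fin_one]; norm_num [tridiag]
      rw [show (3*0+1 : ℕ) = 1 from rfl] at h1
      rw [h1, Matrix.det_fin_zero]; ring
  | succ k ih =>
    obtain ⟨h0, h1, h2⟩ := ih
    have e1 : (tridiag (3*(k+1)) (-2 : ℝ) (-2) (-2)).det = 8 ^ (k+1) := by
      rw [show 3*(k+1) = (3*k+1)+2 by ring, detT_rec,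
          show (3*k+1)+1 = 3*k+2 by ring, h2, h1]
      ring
    have e2 : (tridiag (3*(k+1)+1) (-2 : ℝ) (-2) (-2)).det = -2 * 8 ^ (k+1) := by
      rw [show 3*(k+1)+1 = (3*k+2)+2 by ring, detT_rec,
          show (3*k+2)+1 = 3*(k+1) by ring, e1, h2]
      ring
    have e3 : (tridiag (3*(k+1)+2) (-2 : ℝ) (-2) (-2)).det = 0 := by
      rw [show 3*(k+1)+2 = (3*(k+1))+2 by ring, detT_rec,
          show (3*(k+1))+1 = 3*(k+1)+1 from rfl, e1, e2]
      ring
    exact ⟨e1, e2, e3⟩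

def xv (m r : ℕ) : Fin m → ℝ := fun j => if (j : ℕ) % 3 = r then (-1/2 : ℝ) else 0

lemma sum_xv (m r : ℕ) (hr : r < 3) :
    ∑ j : Fin m, xv m r j = -(((m + 2 - r) / 3 : ℕ) : ℝ) / 2 := by
  induction m with
  | zero =>
    rw [show ((0 + 2 - r) / 3 : ℕ) = 0 by omega]
    simp
  | succ m ih =>
    rw [Fin.sum_univ_castSucc]
    have hcast : ∀ j : Fin m, xv (m+1) r (Fin.castSucc j) = xv m r j := by
      intro j; simp [xv]
    rw [Finset.sum_congr rfl (fun j _ => hcast j), ih]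
    simp only [xv, Fin.val_last]
    by_cases hm3 : m % 3 = r
    · rw [if_pos hm3, show ((m + 1 + 2 - r) / 3 : ℕ) = (m + 2 - r) / 3 + 1 by omega]
      push_cast; ring
    · rw [if_neg hm3, show ((m + 1 + 2 - r) / 3 : ℕ) = (m + 2 - r) / 3 by omega]
      push_cast; ring

lemma sum_single_tri (m r : ℕ) (i : Fin m) (t : ℕ) (htm : t < m) (htr : t % 3 = r)
    (hadj : (i : ℕ) = t ∨ t = (i : ℕ) + 1 ∨ (i : ℕ) = t + 1)
    (huniq : ∀ s : ℕ, s < m → s % 3 = r →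
      ((i : ℕ) = s ∨ s = (i : ℕ) + 1 ∨ (i : ℕ) = s + 1) → s = t) :
    ∑ j, tridiag m (-2 : ℝ) (-2) (-2) i j * xv m r j = 1 := by
  rw [Finset.sum_eq_single_of_mem (⟨t, htm⟩ : Fin m) (Finset.mem_univ _)]
  · rw [tri_apply]
    simp only [xv]
    rw [if_pos hadj, if_pos htr]
    norm_num
  · intro b _ hb
    rw [tri_apply]
    simp only [xv]
    split_ifs with h1 h2
    · exact absurd (Fin.ext (huniq b b.isLt h2 h1)) hb
    · ring
    · ring
    · ring

lemma mulVec_xv (m r : ℕ) (hr : r = 0 ∨ r = 1) (hmr : m % 3 ≠ r) (i : Fin m) :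
    ((tridiag m (-2 : ℝ) (-2) (-2)).mulVec (xv m r)) i = 1 := by
  have hi := i.isLt
  simp only [mulVec, dotProduct]
  by_cases hA : (i : ℕ) % 3 = r
  · exact sum_single_tri m r i i hi hA (by omega) (by omega)
  · by_cases hB : ((i : ℕ) + 1) % 3 = r
    · exact sum_single_tri m r i ((i : ℕ) + 1) (by omega) hB (by omega) (by omega)
    · exact sum_single_tri m r i ((i : ℕ) - 1) (by omega) (by omega) (by omega) (by omega)


lemma border_zero_zero {R : Type*} [Zero R] [One R] {m : ℕ} (A : Matrix (Fin m) (Fin m) R) :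
    border A 0 0 = 0 := by simp [border]

lemma border_zero_succ {R : Type*} [Zero R] [One R] {m : ℕ} (A : Matrix (Fin m) (Fin m) R)
    (j : Fin m) : border A 0 j.succ = 1 := by simp [border, Fin.succ_ne_zero]

lemma border_succ_zero {R : Type*} [Zero R] [One R] {m : ℕ} (A : Matrix (Fin m) (Fin m) R)
    (i : Fin m) : border A i.succ 0 = 1 := by simp [border, Fin.succ_ne_zero]

lemma border_succ_succ {R : Type*} [Zero R] [One R] {m : ℕ} (A : Matrix (Fin m) (Fin m) R)
    (i j : Fin m) : border A i.succ j.succ = A i j := by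
  simp [border, Fin.succ_ne_zero, Fin.pred_succ]

def uv (m r : ℕ) : Fin (m + 1) → ℝ :=
  fun i => if h : i = 0 then -1 else xv m r (i.pred h)

lemma uv_zero (m r : ℕ) : uv m r 0 = -1 := by simp [uv]

lemma uv_succ (m r : ℕ) (i : Fin m) : uv m r i.succ = xv m r i := by
  simp [uv, Fin.succ_ne_zero, Fin.pred_succ]

lemma border_mulVec (m r : ℕ) (hr : r = 0 ∨ r = 1) (hmr : m % 3 ≠ r) :
    (border (tridiag m (-2 : ℝ) (-2) (-2))).mulVec (uv m r)
      = fun i => if i = 0 then (∑ j : Fin m, xv m r j) else 0 := by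
  funext i
  induction i using Fin.cases with
  | zero =>
    simp only [mulVec, dotProduct, if_pos rfl]
    rw [Fin.sum_univ_succ, border_zero_zero]
    rw [Finset.sum_congr rfl (fun j _ => by rw [border_zero_succ, uv_succ, one_mul])]
    simp
  | succ i =>
    simp only [mulVec, dotProduct, if_neg (Fin.succ_ne_zero i)]
    rw [Fin.sum_univ_succ, border_succ_zero, uv_zero]
    rw [Finset.sum_congr rfl (fun j _ => by rw [border_succ_succ, uv_succ])]
    have := mulVec_xv m r hr hmr i
    simp only [mulVec, dotProduct] at this
    rw [this]; ring

lemma det_border_nonsing (m r : ℕ) (hr : r = 0 ∨ r = 1) (hmr : m % 3 ≠ r) :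
    (border (tridiag m (-2 : ℝ) (-2) (-2))).det
      = (((m + 2 - r) / 3 : ℕ) : ℝ) / 2 * (tridiag m (-2 : ℝ) (-2) (-2)).det := by
  set B := border (tridiag m (-2 : ℝ) (-2) (-2)) with hB
  have key := det_updateCol_sum B 0 (uv m r)
  have hcol : (fun k => ∑ i, uv m r i • B k i) = B.mulVec (uv m r) := by
    funext k
    simp [mulVec, dotProduct, mul_comm]
  rw [hcol, hB, border_mulVec m r hr hmr, ← hB] at key
  set w : Fin (m+1) → ℝ := fun i => if i = 0 then (∑ j : Fin m, xv m r j) else 0 with hw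
  -- compute LHS of key
  have lhs : (B.updateCol 0 w).det
      = (∑ j : Fin m, xv m r j) * (tridiag m (-2 : ℝ) (-2) (-2)).det := by
    rw [det_succ_column_zero]
    rw [Fin.sum_univ_succ]
    have hz : ∀ i : Fin m, (-1 : ℝ) ^ ((i.succ : Fin (m+1)) : ℕ) * (B.updateCol 0 w) i.succ 0 *
        ((B.updateCol 0 w).submatrix (i.succ).succAbove Fin.succ).det = 0 := by
      intro i
      rw [updateCol_self, hw]
      simp [Fin.succ_ne_zero]
    rw [Finset.sum_eq_zero (fun i _ => hz i), add_zero]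
    rw [updateCol_self, hw]
    have hsub : (B.updateCol 0 w).submatrix (Fin.succAbove 0) Fin.succ
        = tridiag m (-2 : ℝ) (-2) (-2) := by
      ext i j
      rw [Fin.succAbove_zero, submatrix_apply, updateCol_ne (Fin.succ_ne_zero j), hB,
        border_succ_succ]
    rw [hsub]
    simp
  rw [lhs, uv_zero] at key
  have hs := sum_xv m r (by omega)
  rw [hs] at key
  -- key : -(c)/2 * det T = -1 • det B
  have : (-1 : ℝ) • B.det = -B.det := by simp
  rw [this] at key
  linarith [key]

def pv (m : ℕ) : Fin m → ℝ :=
  fun j => if (j : ℕ) % 3 = 0 then 1 else if (j : ℕ) % 3 = 1 then -1 else 0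

lemma sum_pv (m : ℕ) :
    ∑ j : Fin m, pv m j = (((m + 2) / 3 : ℕ) : ℝ) - (((m + 1) / 3 : ℕ) : ℝ) := by
  induction m with
  | zero => simp
  | succ m ih =>
    rw [Fin.sum_univ_castSucc]
    have hcast : ∀ j : Fin m, pv (m+1) (Fin.castSucc j) = pv m j := by
      intro j; simp [pv]
    rw [Finset.sum_congr rfl (fun j _ => hcast j), ih]
    simp only [pv, Fin.val_last]
    by_cases h0 : m % 3 = 0
    · rw [if_pos h0, show ((m + 1 + 2) / 3 : ℕ) = (m + 2) / 3 + 1 by omega,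
        show ((m + 1 + 1) / 3 : ℕ) = (m + 1) / 3 by omega]
      push_cast; ring
    · by_cases h1 : m % 3 = 1
      · rw [if_neg h0, if_pos h1, show ((m + 1 + 2) / 3 : ℕ) = (m + 2) / 3 by omega,
          show ((m + 1 + 1) / 3 : ℕ) = (m + 1) / 3 + 1 by omega]
        push_cast; ring
      · rw [if_neg h0, if_neg h1, show ((m + 1 + 2) / 3 : ℕ) = (m + 2) / 3 by omega,
          show ((m + 1 + 1) / 3 : ℕ) = (m + 1) / 3 by omega]
        push_cast; ring

lemma sum_pair {m : ℕ} (f : Fin m → ℝ) (a b : Fin m) (hab : a ≠ b)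
    (h0 : ∀ j, j ≠ a → j ≠ b → f j = 0) : ∑ j, f j = f a + f b := by
  classical
  rw [← Finset.sum_subset (Finset.subset_univ ({a, b} : Finset (Fin m))) (fun x _ hx => by
    simp only [Finset.mem_insert, Finset.mem_singleton] at hx
    push_neg at hx
    exact h0 x hx.1 hx.2)]
  rw [Finset.sum_insert (by simp [hab]), Finset.sum_singleton]

lemma sum_triple {m : ℕ} (f : Fin m → ℝ) (a b c : Fin m) (hab : a ≠ b) (hac : a ≠ c)
    (hbc : b ≠ c) (h0 : ∀ j, j ≠ a → j ≠ b → j ≠ c → f j = 0) :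
    ∑ j, f j = f a + f b + f c := by
  classical
  rw [add_assoc]
  rw [← Finset.sum_subset (Finset.subset_univ ({a, b, c} : Finset (Fin m))) (fun x _ hx => by
    simp only [Finset.mem_insert, Finset.mem_singleton] at hx
    push_neg at hx
    exact h0 x hx.1 hx.2.1 hx.2.2)]
  rw [Finset.sum_insert (by simp [hab, hac]), Finset.sum_insert (by simp [hbc]),
    Finset.sum_singleton]

lemma T_mulVec_pv (k : ℕ) (i : Fin (3*k+2)) :
    ∑ j, tridiag (3*k+2) (-2 : ℝ) (-2) (-2) i j * pv (3*k+2) j = 0 := by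
  have hi := i.isLt
  by_cases hA : (i : ℕ) = 0
  · rw [sum_pair _ (⟨0, by omega⟩ : Fin (3*k+2)) (⟨1, by omega⟩ : Fin (3*k+2))
      (by simp [Fin.ext_iff])
      (fun j hja hjb => by
        rw [tri_apply]
        rw [if_neg (by simp only [ne_eq, Fin.ext_iff, Fin.val_mk] at hja hjb; omega)]
        ring)]
    rw [tri_apply, tri_apply]
    rw [if_pos (by first | omega | (simp only [Fin.val_mk]; omega) | simp), if_pos (by first | omega | (simp only [Fin.val_mk]; omega) | simp)]
    simp [pv]
  · by_cases hB : (i : ℕ) = 3*k+1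
    · rw [sum_pair _ (⟨3*k, by omega⟩ : Fin (3*k+2)) (⟨3*k+1, by omega⟩ : Fin (3*k+2))
        (by simp [Fin.ext_iff])
        (fun j hja hjb => by
          rw [tri_apply]
          rw [if_neg (by simp only [ne_eq, Fin.ext_iff, Fin.val_mk] at hja hjb; omega)]
          ring)]
      rw [tri_apply, tri_apply]
      rw [if_pos (by first | omega | (simp only [Fin.val_mk]; omega) | simp), if_pos (by first | omega | (simp only [Fin.val_mk]; omega) | simp)]
      simp only [pv]
      rw [if_pos (by first | omega | (simp only [Fin.val_mk]; omega) | simp), if_neg (by first | omega | (simp only [Fin.val_mk]; omega) | simp), if_pos (by first | omega | (simp only [Fin.val_mk]; omega) | simp)]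
      ring
    · rw [sum_triple _ (⟨(i : ℕ) - 1, by omega⟩ : Fin (3*k+2))
        (⟨(i : ℕ), by omega⟩ : Fin (3*k+2)) (⟨(i : ℕ) + 1, by omega⟩ : Fin (3*k+2))
        (by intro hco; rw [Fin.mk.injEq] at hco; omega) (by intro hco; rw [Fin.mk.injEq] at hco; omega)
        (by intro hco; rw [Fin.mk.injEq] at hco; omega)
        (fun j hja hjb hjc => by
          rw [tri_apply]
          rw [if_neg (by simp only [ne_eq, Fin.ext_iff, Fin.val_mk] at hja hjb hjc; omega)]
          ring)]
      rw [tri_apply, tri_apply, tri_apply]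
      rw [if_pos (by first | omega | (simp only [Fin.val_mk]; omega) | simp), if_pos (by first | omega | (simp only [Fin.val_mk]; omega) | simp), if_pos (by first | omega | (simp only [Fin.val_mk]; omega) | simp)]
      simp only [pv]
      split_ifs <;> first | (exfalso; omega) | norm_num

lemma det_border_sing (k : ℕ) :
    (border (tridiag (3*k+2) (-2 : ℝ) (-2) (-2))).det = 0 := by
  apply Matrix.exists_mulVec_eq_zero_iff.mp
  refine ⟨fun i => if h : i = 0 then 0 else pv (3*k+2) (i.pred h), ?_, ?_⟩
  · intro heq
    have h1 := congrFun heq (Fin.succ (0 : Fin (3*k+2)))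
    simp only [dif_neg (Fin.succ_ne_zero _), Fin.pred_succ, Pi.zero_apply] at h1
    simp [pv] at h1
  · funext i
    induction i using Fin.cases with
    | zero =>
      simp only [mulVec, dotProduct, Pi.zero_apply]
      rw [Fin.sum_univ_succ, border_zero_zero]
      rw [Finset.sum_congr rfl (fun j _ => by
        rw [border_zero_succ, dif_neg (Fin.succ_ne_zero _), Fin.pred_succ, one_mul])]
      rw [sum_pv]
      rw [show ((3*k+2+2)/3 : ℕ) = k + 1 by omega, show ((3*k+2+1)/3 : ℕ) = k + 1 by omega]
      simp
    | succ i =>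
      simp only [mulVec, dotProduct, Pi.zero_apply]
      rw [Fin.sum_univ_succ, border_succ_zero, dif_pos rfl]
      rw [Finset.sum_congr rfl (fun j _ => by
        rw [border_succ_succ, dif_neg (Fin.succ_ne_zero _), Fin.pred_succ])]
      rw [T_mulVec_pv]
      ring


theorem stmt2 (n : ℕ) (h : 2 ≤ n) :
    (border (tridiag (n - 1) (-2 : ℝ) (-2) (-2))).det =
      if n % 3 = 0 then 0
      else if n % 3 = 1 then 2 ^ (n - 2) * ((n : ℝ) - 1) / 3
      else -(2 ^ (n - 2) * ((n : ℝ) + 1) / 3) := by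
  by_cases h0 : n % 3 = 0
  · obtain ⟨k, rfl⟩ : ∃ k, n = 3*k+3 := ⟨n/3 - 1, by omega⟩
    rw [if_pos (by omega)]
    rw [show 3*k+3-1 = 3*k+2 by omega]
    exact det_border_sing k
  · by_cases h1 : n % 3 = 1
    · obtain ⟨k, rfl⟩ : ∃ k, n = 3*k+1 := ⟨n/3, by omega⟩
      have hk : 1 ≤ k := by omega
      rw [if_neg (by omega), if_pos (by omega)]
      rw [show 3*k+1-1 = 3*k by omega]
      rw [det_border_nonsing (3*k) 1 (Or.inr rfl) (by omega)]
      rw [(detT_mod k).1]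
      rw [show ((3*k+2-1)/3 : ℕ) = k by omega]
      rw [show 3*k+1-2 = 3*k-1 by omega]
      have h8 : (8 : ℝ)^k = 2^(3*k) := by
        rw [show (8:ℝ) = 2^3 by norm_num, ← pow_mul]
      have h2 : (2:ℝ)^(3*k) = 2 * 2^(3*k-1) := by
        rw [← pow_succ']
        congr 1; omega
      rw [h8, h2]
      push_cast
      ring
    · obtain ⟨k, rfl⟩ : ∃ k, n = 3*k+2 := ⟨n/3, by omega⟩
      rw [if_neg (by omega), if_neg (by omega)]
      rw [show 3*k+2-1 = 3*k+1 by omega]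
      rw [det_border_nonsing (3*k+1) 0 (Or.inl rfl) (by omega)]
      rw [(detT_mod k).2.1]
      rw [show ((3*k+1+2-0)/3 : ℕ) = k+1 by omega]
      rw [show 3*k+2-2 = 3*k by omega]
      have h8 : (8 : ℝ)^k = 2^(3*k) := by
        rw [show (8:ℝ) = 2^3 by norm_num, ← pow_mul]
      rw [h8]
      push_cast
      ring
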